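/- Let F have support [v̲, v̄] with v̲ ≥ 0, and let ψ = π_{v̲-SPA}/π_MYE where π_{v̲-SPA} = E_v[φ_F(v)] is the revenue of a second-price auction with reserve v̲ for a single item and π_MYE = E_v[1{v ≥ r_MYE}·φ_F(v)] is Myerson's optimal single-item revenue, with r_MYE = φ_F^{-1}(0). Then for every price landscape H (strictly increasing, positive, H(0)=0): π*_NC ≥ ψ · π*_C, where π*_NC = ∫_0^{v̲}H + E_v[φ_F(v)H(v)] and π*_C = E_v[1{v ≥ r_MYE}·φ_F(v)·H(v)]. -/
import Mathlib


open Set intervalIntegral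

lemma indicator_interval_integral (g : ℝ → ℝ) (a b c : ℝ) (hac : a ≤ c) (hcb : c ≤ b) :
    (∫ v in a..b, (if c ≤ v then g v else 0)) = ∫ v in c..b, g v := by
  rw [intervalIntegral.integral_of_le (hac.trans hcb), intervalIntegral.integral_of_le hcb]
  have h1 : (fun v => if c ≤ v then g v else 0) = (Ici c).indicator g := by
    funext v; simp [Set.indicator_apply, Set.mem_Ici]
  rw [h1, MeasureTheory.setIntegral_indicator measurableSet_Ici]
  apply MeasureTheory.setIntegral_congr_set
  rw [MeasureTheory.ae_eq_set]
  constructor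
  · refine MeasureTheory.measure_mono_null ?_ (Real.volume_singleton (a := c))
    intro x hx
    simp only [Set.mem_diff, Set.mem_inter_iff, Set.mem_Ioc, Set.mem_Ici,
      Set.mem_singleton_iff] at *
    rcases hx with ⟨⟨⟨_, hxb⟩, hcx⟩, hnot⟩
    by_contra h
    exact hnot ⟨lt_of_le_of_ne hcx (Ne.symm h), hxb⟩
  · refine MeasureTheory.measure_mono_null ?_ (MeasureTheory.measure_empty (μ := MeasureTheory.volume))
    intro x hx
    simp only [Set.mem_diff, Set.mem_inter_iff, Set.mem_Ioc, Set.mem_Ici] at hx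
    rcases hx with ⟨⟨hcx, hxb⟩, hnot⟩
    exact hnot ⟨⟨lt_of_le_of_lt hac hcx, hxb⟩, le_of_lt hcx⟩

theorem stmt11 (H f : ℝ → ℝ) (vlow vhigh rM : ℝ)
    (hv0 : 0 ≤ vlow) (hvv : vlow < vhigh)
    (hHcont : Continuous H) (hHmono : Monotone H) (hH0 : H 0 = 0)
    (hHnonneg : ∀ z, 0 ≤ H z) (hHpos : ∀ z, 0 < z → 0 < H z)
    (hfcont : Continuous f) (hfpos : ∀ v ∈ Icc vlow vhigh, 0 < f v)
    (hfone : (∫ v in vlow..vhigh, f v) = 1)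
    (φ : ℝ → ℝ) (hφ : ∀ v, φ v = v - (1 - ∫ z in vlow..v, f z) / f v)
    (hφmono : StrictMonoOn φ (Icc vlow vhigh))
    (hrM : φ rM = 0) (hrMmem : rM ∈ Icc vlow vhigh)
    (hMYEpos : 0 < ∫ v in vlow..vhigh, (if rM ≤ v then φ v else 0) * f v) :
    (∫ z in (0:ℝ)..vlow, H z) + (∫ v in vlow..vhigh, φ v * H v * f v) ≥
      ((∫ v in vlow..vhigh, φ v * f v) /
        (∫ v in vlow..vhigh, (if rM ≤ v then φ v else 0) * f v)) *
        (∫ v in vlow..vhigh, (if rM ≤ v then φ v * H v else 0) * f v) := by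
  obtain ⟨hvr, hrv⟩ := hrMmem
  have hvv' : vlow ≤ vhigh := le_of_lt hvv
  -- continuity of φ on Icc
  have hφfun : φ = fun v => v - (1 - ∫ z in vlow..v, f z) / f v := funext hφ
  have hprim : Continuous fun v => ∫ z in vlow..v, f z :=
    intervalIntegral.continuous_primitive (fun a b => hfcont.intervalIntegrable a b) vlow
  have hφcont : ContinuousOn φ (Icc vlow vhigh) := by
    rw [hφfun]
    apply ContinuousOn.sub continuousOn_id
    apply ContinuousOn.div
    · exact (continuous_const.sub hprim).continuousOn
    · exact hfcont.continuousOn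
    · intro v hv; exact ne_of_gt (hfpos v hv)
  -- rewrite the indicator integrals
  have hP : (∫ v in vlow..vhigh, (if rM ≤ v then φ v else 0) * f v)
      = ∫ v in rM..vhigh, φ v * f v := by
    rw [← indicator_interval_integral (fun v => φ v * f v) vlow vhigh rM hvr hrv]
    congr 1; funext v; by_cases h : rM ≤ v <;> simp [h]
  have hA : (∫ v in vlow..vhigh, (if rM ≤ v then φ v * H v else 0) * f v)
      = ∫ v in rM..vhigh, φ v * H v * f v := by
    rw [← indicator_interval_integral (fun v => φ v * H v * f v) vlow vhigh rM hvr hrv]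
    congr 1; funext v; by_cases h : rM ≤ v <;> simp [h]
  -- integrability facts
  have hsub1 : Icc vlow rM ⊆ Icc vlow vhigh := Icc_subset_Icc le_rfl hrv
  have hsub2 : Icc rM vhigh ⊆ Icc vlow vhigh := Icc_subset_Icc hvr le_rfl
  have hInt1 : IntervalIntegrable (fun v => φ v * f v) MeasureTheory.volume vlow rM := by
    apply ContinuousOn.intervalIntegrable
    rw [uIcc_of_le hvr]
    exact (hφcont.mono hsub1).mul (hfcont.continuousOn)
  have hInt2 : IntervalIntegrable (fun v => φ v * f v) MeasureTheory.volume rM vhigh := by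
    apply ContinuousOn.intervalIntegrable
    rw [uIcc_of_le hrv]
    exact (hφcont.mono hsub2).mul (hfcont.continuousOn)
  have hInt1H : IntervalIntegrable (fun v => φ v * H v * f v) MeasureTheory.volume vlow rM := by
    apply ContinuousOn.intervalIntegrable
    rw [uIcc_of_le hvr]
    exact ((hφcont.mono hsub1).mul hHcont.continuousOn).mul hfcont.continuousOn
  have hInt2H : IntervalIntegrable (fun v => φ v * H v * f v) MeasureTheory.volume rM vhigh := by
    apply ContinuousOn.intervalIntegrable
    rw [uIcc_of_le hrv]
    exact ((hφcont.mono hsub2).mul hHcont.continuousOn).mul hfcont.continuousOn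
  -- split
  have hT : (∫ v in vlow..vhigh, φ v * f v)
      = (∫ v in vlow..rM, φ v * f v) + ∫ v in rM..vhigh, φ v * f v :=
    (intervalIntegral.integral_add_adjacent_intervals hInt1 hInt2).symm
  have hS : (∫ v in vlow..vhigh, φ v * H v * f v)
      = (∫ v in vlow..rM, φ v * H v * f v) + ∫ v in rM..vhigh, φ v * H v * f v :=
    (intervalIntegral.integral_add_adjacent_intervals hInt1H hInt2H).symm
  set N := ∫ v in vlow..rM, φ v * f v with hNdef
  set P := ∫ v in rM..vhigh, φ v * f v with hPdef
  set B := ∫ v in vlow..rM, φ v * H v * f v with hBdef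
  set A := ∫ v in rM..vhigh, φ v * H v * f v with hAdef
  set I0 := ∫ z in (0:ℝ)..vlow, H z with hI0def
  have hmonoOn : MonotoneOn φ (Icc vlow vhigh) := hφmono.monotoneOn
  -- pointwise sign facts
  have hφneg : ∀ v ∈ Icc vlow rM, φ v ≤ 0 := by
    intro v hv
    have hv' : v ∈ Icc vlow vhigh := hsub1 hv
    have := hmonoOn hv' ⟨hvr, hrv⟩ hv.2
    linarith [hrM ▸ this]
  have hφpos : ∀ v ∈ Icc rM vhigh, 0 ≤ φ v := by
    intro v hv
    have hv' : v ∈ Icc vlow vhigh := hsub2 hv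
    have := hmonoOn ⟨hvr, hrv⟩ hv' hv.1
    linarith [hrM ▸ this]
  -- N ≤ 0
  have hNle : N ≤ 0 := by
    have : 0 ≤ ∫ v in vlow..rM, -(φ v * f v) := by
      apply intervalIntegral.integral_nonneg hvr
      intro v hv
      have := hφneg v hv
      have := (hfpos v (hsub1 hv)).le
      nlinarith
    rw [intervalIntegral.integral_neg] at this
    linarith
  -- P > 0
  have hPpos : 0 < P := hP ▸ hMYEpos
  -- B ≥ H rM * N
  have hBN : H rM * N ≤ B := by
    have h0 : 0 ≤ ∫ v in vlow..rM, (φ v * H v * f v - H rM * (φ v * f v)) := by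
      apply intervalIntegral.integral_nonneg hvr
      intro v hv
      have h1 := hφneg v hv
      have h2 := (hfpos v (hsub1 hv)).le
      have h3 : H v ≤ H rM := hHmono hv.2
      nlinarith [mul_nonneg (mul_nonneg (neg_nonneg.mpr h1) h2) (sub_nonneg.mpr h3)]
    rw [intervalIntegral.integral_sub hInt1H (hInt1.const_mul _),
      intervalIntegral.integral_const_mul] at h0
    linarith
  -- A ≥ H rM * P
  have hAP : H rM * P ≤ A := by
    have h0 : 0 ≤ ∫ v in rM..vhigh, (φ v * H v * f v - H rM * (φ v * f v)) := by
      apply intervalIntegral.integral_nonneg hrv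
      intro v hv
      have h1 := hφpos v hv
      have h2 := (hfpos v (hsub2 hv)).le
      have h3 : H rM ≤ H v := hHmono hv.1
      nlinarith [mul_nonneg (mul_nonneg h1 h2) (sub_nonneg.mpr h3)]
    rw [intervalIntegral.integral_sub hInt2H (hInt2.const_mul _),
      intervalIntegral.integral_const_mul] at h0
    linarith
  -- I0 ≥ 0
  have hI0 : 0 ≤ I0 :=
    intervalIntegral.integral_nonneg hv0 fun u _ => hHnonneg u
  have hHrM : 0 ≤ H rM := hHnonneg rM
  -- conclude
  rw [hP, hA, hT, hS, ge_iff_le, div_mul_eq_mul_div, div_le_iff₀ hPpos]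
  nlinarith [mul_le_mul_of_nonneg_left hAP (neg_nonneg.mpr hNle),
    mul_le_mul_of_nonneg_right hBN hPpos.le, mul_nonneg hI0 hPpos.le]
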